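/- Among all product probability measures μ₁ ⊗ μ₂ on a product measurable space E₁ × E₂ that are absolutely continuous dominating measures for a probability measure π (i.e., π ≪ μ₁ ⊗ μ₂), the product of the marginals π₁ ⊗ π₂ of π minimizes the KL divergence KL(π ‖ μ₁ ⊗ μ₂). -/

import Mathlib

open MeasureTheory Classical
open scoped ENNReal

section Aux

variable {α : Type*} [MeasurableSpace α]

/-- The negative part of the log-likelihood ratio is always integrable. -/
lemma integrable_neg_part_llr (μ ν : Measure α) [IsProbabilityMeasure μ] [IsProbabilityMeasure ν]
    (h : μ ≪ ν) :
    Integrable (fun x => max (-Real.log ((μ.rnDeriv ν x).toReal)) 0) μ := by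
  rw [← integrable_rnDeriv_smul_iff h]
  refine Integrable.mono' (integrable_const (1 : ℝ)) ?_ ?_
  · exact (((Measure.measurable_rnDeriv μ ν).ennreal_toReal).smul
      (((Measure.measurable_rnDeriv μ ν).ennreal_toReal.log.neg).max
        measurable_const)).aestronglyMeasurable
  · refine Filter.Eventually.of_forall fun x => ?_
    set g : ℝ := (μ.rnDeriv ν x).toReal with hg
    have hg0 : 0 ≤ g := ENNReal.toReal_nonneg
    have hmax : 0 ≤ max (-Real.log g) 0 := le_max_right _ _
    rw [smul_eq_mul, Real.norm_eq_abs, abs_of_nonneg (mul_nonneg hg0 hmax)]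
    rcases eq_or_lt_of_le hg0 with hzero | hpos
    · simp [← hzero]
    rcases le_or_gt 0 (Real.log g) with hlog | hlog
    · rw [max_eq_right (by linarith)]
      simp
    · rw [max_eq_left (by linarith)]
      have h1 : Real.log g⁻¹ ≤ g⁻¹ - 1 := Real.log_le_sub_one_of_pos (inv_pos.mpr hpos)
      rw [Real.log_inv] at h1
      have h2 : g * g⁻¹ = 1 := mul_inv_cancel₀ hpos.ne'
      nlinarith [mul_le_mul_of_nonneg_left h1 hg0]

/-- Gibbs' inequality: the KL divergence integral is nonnegative. -/
lemma integral_llr_nonneg' (μ ν : Measure α) [IsProbabilityMeasure μ] [IsProbabilityMeasure ν]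
    (h : μ ≪ ν) (hint : Integrable (fun x => Real.log ((μ.rnDeriv ν x).toReal)) μ) :
    0 ≤ ∫ x, Real.log ((μ.rnDeriv ν x).toReal) ∂μ := by
  rw [← integral_rnDeriv_smul h]
  have h1 : Integrable (fun x => (μ.rnDeriv ν x).toReal •
      Real.log ((μ.rnDeriv ν x).toReal)) ν := (integrable_rnDeriv_smul_iff h).mpr hint
  have h2 : Integrable (fun x => (μ.rnDeriv ν x).toReal - 1) ν :=
    Measure.integrable_toReal_rnDeriv.sub (integrable_const 1)
  have h3 : ∫ x, ((μ.rnDeriv ν x).toReal - 1) ∂ν = 0 := by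
    rw [integral_sub Measure.integrable_toReal_rnDeriv (integrable_const 1),
      Measure.integral_toReal_rnDeriv h]
    simp
  calc (0 : ℝ) = ∫ x, ((μ.rnDeriv ν x).toReal - 1) ∂ν := h3.symm
    _ ≤ ∫ x, (μ.rnDeriv ν x).toReal • Real.log ((μ.rnDeriv ν x).toReal) ∂ν := by
        refine integral_mono h2 h1 fun x => ?_
        set g : ℝ := (μ.rnDeriv ν x).toReal with hg
        have hg0 : 0 ≤ g := ENNReal.toReal_nonneg
        rcases eq_or_lt_of_le hg0 with hzero | hpos
        · simp [← hzero]
        have ha : Real.log g⁻¹ ≤ g⁻¹ - 1 := Real.log_le_sub_one_of_pos (inv_pos.mpr hpos)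
        rw [Real.log_inv] at ha
        have hb : g * g⁻¹ = 1 := mul_inv_cancel₀ hpos.ne'
        simp only [smul_eq_mul]
        nlinarith [mul_le_mul_of_nonneg_left ha hg0]

lemma abs_le_of_eq_add_add {a b c d : ℝ} (h : a = b + c + d) :
    |b| ≤ |a| + (max (-b) 0 + max (-c) 0 + max (-d) 0) := by
  rcases le_total b 0 with hb | hb
  · rw [abs_of_nonpos hb]
    nlinarith [abs_nonneg a, le_max_left (-b) (0:ℝ), le_max_right (-c) (0:ℝ),
      le_max_right (-d) (0:ℝ)]
  · rw [abs_of_nonneg hb]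
    nlinarith [le_abs_self a, le_max_left (-c) (0:ℝ), le_max_left (-d) (0:ℝ),
      le_max_right (-b) (0:ℝ)]

end Aux

/-- The Kullback–Leibler divergence: `∫ log (dπ/dν) dπ` when `π ≪ ν` (with an integrable
log-density), and `+∞` otherwise. -/
noncomputable def klDiv' {α : Type*} [MeasurableSpace α] (π ν : Measure α) : EReal :=
  if π ≪ ν ∧ Integrable (fun x => Real.log ((π.rnDeriv ν x).toReal)) π then
    ((∫ x, Real.log ((π.rnDeriv ν x).toReal) ∂π : ℝ) : EReal)
  else ⊤

/-- Among all product probability measures `μ₁ ⊗ μ₂` dominating a probability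
measure `π` on `E₁ × E₂`, the product `π₁ ⊗ π₂` of the marginals of `π` minimizes the KL
divergence `KL(π ‖ μ₁ ⊗ μ₂)`. -/
theorem stmt_1 {E₁ E₂ : Type*} [MeasurableSpace E₁] [MeasurableSpace E₂]
    [StandardBorelSpace E₁] [StandardBorelSpace E₂]
    (π : Measure (E₁ × E₂)) [IsProbabilityMeasure π]
    (μ₁ : Measure E₁) (μ₂ : Measure E₂)
    [IsProbabilityMeasure μ₁] [IsProbabilityMeasure μ₂]
    (hac : π ≪ μ₁.prod μ₂) :
    klDiv' π ((π.map Prod.fst).prod (π.map Prod.snd)) ≤ klDiv' π (μ₁.prod μ₂) := by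
  set ν : Measure (E₁ × E₂) := μ₁.prod μ₂ with hν
  by_cases hcase : π ≪ ν ∧ Integrable (fun x => Real.log ((π.rnDeriv ν x).toReal)) π
  case neg =>
    simp only [klDiv']
    rw [if_neg hcase]
    exact le_top
  obtain ⟨-, hint⟩ := hcase
  set π₁ : Measure E₁ := π.map Prod.fst with hπ₁def
  set π₂ : Measure E₂ := π.map Prod.snd with hπ₂def
  have hprob₁ : IsProbabilityMeasure π₁ := Measure.isProbabilityMeasure_map measurable_fst.aemeasurable
  have hprob₂ : IsProbabilityMeasure π₂ := Measure.isProbabilityMeasure_map measurable_snd.aemeasurable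
  have hmap1 : ν.map Prod.fst = μ₁ := by
    rw [hν, Measure.map_fst_prod, measure_univ, one_smul]
  have hmap2 : ν.map Prod.snd = μ₂ := by
    rw [hν, Measure.map_snd_prod, measure_univ, one_smul]
  have hπ₁ : π₁ ≪ μ₁ := hmap1 ▸ hac.map measurable_fst
  have hπ₂ : π₂ ≪ μ₂ := hmap2 ▸ hac.map measurable_snd
  set g₁ : E₁ → ℝ≥0∞ := π₁.rnDeriv μ₁ with hg₁def
  set g₂ : E₂ → ℝ≥0∞ := π₂.rnDeriv μ₂ with hg₂def
  have hmg₁ : Measurable g₁ := Measure.measurable_rnDeriv _ _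
  have hmg₂ : Measurable g₂ := Measure.measurable_rnDeriv _ _
  set G : E₁ × E₂ → ℝ≥0∞ := fun p => g₁ p.1 * g₂ p.2 with hGdef
  have hmG : Measurable G := (hmg₁.comp measurable_fst).mul (hmg₂.comp measurable_snd)
  set ρ : Measure (E₁ × E₂) := π₁.prod π₂ with hρdef
  have hρ : ρ = ν.withDensity G := by
    refine Measure.prod_eq fun s t hs ht => ?_
    rw [withDensity_apply _ (hs.prod ht), ← Measure.prod_restrict,
      lintegral_prod_mul hmg₁.aemeasurable hmg₂.aemeasurable,
      Measure.setLIntegral_rnDeriv hπ₁, Measure.setLIntegral_rnDeriv hπ₂]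
  set f : E₁ × E₂ → ℝ≥0∞ := π.rnDeriv ν with hfdef
  have hmf : Measurable f := Measure.measurable_rnDeriv _ _
  have hνf : ν.withDensity f = π := Measure.withDensity_rnDeriv_eq _ _ hac
  -- null sets where the marginal densities vanish
  have hset₁ : MeasurableSet {x : E₁ | g₁ x = 0} := hmg₁ (measurableSet_singleton 0)
  have hset₂ : MeasurableSet {y : E₂ | g₂ y = 0} := hmg₂ (measurableSet_singleton 0)
  have hg₁0 : π₁ {x | g₁ x = 0} = 0 := by
    rw [← Measure.setLIntegral_rnDeriv hπ₁,
      setLIntegral_congr_fun hset₁ (fun x hx => hx)]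
    simp
  have hg₂0 : π₂ {y | g₂ y = 0} = 0 := by
    rw [← Measure.setLIntegral_rnDeriv hπ₂,
      setLIntegral_congr_fun hset₂ (fun y hy => hy)]
    simp
  have hπg₁0 : π {p : E₁ × E₂ | g₁ p.1 = 0} = 0 := by
    calc π {p : E₁ × E₂ | g₁ p.1 = 0} = π₁ {x | g₁ x = 0} :=
          (Measure.map_apply measurable_fst hset₁).symm
      _ = 0 := hg₁0
  have hπg₂0 : π {p : E₁ × E₂ | g₂ p.2 = 0} = 0 := by
    calc π {p : E₁ × E₂ | g₂ p.2 = 0} = π₂ {y | g₂ y = 0} :=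
          (Measure.map_apply measurable_snd hset₂).symm
      _ = 0 := hg₂0
  have hπG0 : π {p : E₁ × E₂ | G p = 0} = 0 := by
    refine measure_mono_null (fun p hp => ?_) (measure_union_null hπg₁0 hπg₂0)
    rcases mul_eq_zero.mp hp with h | h
    · exact Or.inl h
    · exact Or.inr h
  -- μᵢ-null sets where the marginal densities are infinite
  have hsetT₁ : MeasurableSet {x : E₁ | g₁ x = ∞} := hmg₁ (measurableSet_singleton ∞)
  have hsetT₂ : MeasurableSet {y : E₂ | g₂ y = ∞} := hmg₂ (measurableSet_singleton ∞)
  have hg₁top : μ₁ {x | g₁ x = ∞} = 0 := by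
    simpa [ae_iff, not_lt, top_le_iff] using Measure.rnDeriv_lt_top π₁ μ₁
  have hg₂top : μ₂ {y | g₂ y = ∞} = 0 := by
    simpa [ae_iff, not_lt, top_le_iff] using Measure.rnDeriv_lt_top π₂ μ₂
  have hνg₁top : ν {p : E₁ × E₂ | g₁ p.1 = ∞} = 0 := by
    calc ν {p : E₁ × E₂ | g₁ p.1 = ∞} = (ν.map Prod.fst) {x | g₁ x = ∞} :=
          (Measure.map_apply measurable_fst hsetT₁).symm
      _ = 0 := by rw [hmap1]; exact hg₁top
  have hνg₂top : ν {p : E₁ × E₂ | g₂ p.2 = ∞} = 0 := by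
    calc ν {p : E₁ × E₂ | g₂ p.2 = ∞} = (ν.map Prod.snd) {y | g₂ y = ∞} :=
          (Measure.map_apply measurable_snd hsetT₂).symm
      _ = 0 := by rw [hmap2]; exact hg₂top
  have hGtop : ∀ᵐ p ∂ν, G p ≠ ∞ := by
    rw [ae_iff]
    refine measure_mono_null (fun p hp => ?_) (measure_union_null hνg₁top hνg₂top)
    simp only [Set.mem_setOf_eq, not_not] at hp
    rcases ENNReal.mul_eq_top.mp hp with ⟨_, h⟩ | ⟨h, _⟩
    · exact Or.inr h
    · exact Or.inl h
  -- f vanishes a.e. on {G = 0}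
  have hsetG : MeasurableSet {p : E₁ × E₂ | G p = 0} := hmG (measurableSet_singleton 0)
  have hf0 : ∀ᵐ p ∂ν, p ∈ {p : E₁ × E₂ | G p = 0} → f p = 0 := by
    have hint0 : ∫⁻ p in {p : E₁ × E₂ | G p = 0}, f p ∂ν = 0 := by
      rw [Measure.setLIntegral_rnDeriv hac]
      exact hπG0
    have hae : f =ᵐ[ν.restrict {p : E₁ × E₂ | G p = 0}] 0 :=
      (lintegral_eq_zero_iff hmf).mp hint0
    rw [← ae_restrict_iff' hsetG]
    filter_upwards [hae] with p hp using hp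
  -- the density of π with respect to ρ
  set H : E₁ × E₂ → ℝ≥0∞ := fun p => if G p = 0 then 0 else f p / G p with hHdef
  have hmH : Measurable H :=
    Measurable.ite (hmG (measurableSet_singleton 0)) measurable_const (hmf.div hmG)
  have hGH : G * H =ᵐ[ν] f := by
    filter_upwards [hGtop, hf0] with p hpt hp0
    rw [Pi.mul_apply]
    by_cases h0 : G p = 0
    · simp only [hHdef, h0, if_pos, mul_zero]
      exact (hp0 h0).symm
    · simp only [hHdef, h0, if_neg, not_false_iff]
      exact ENNReal.mul_div_cancel h0 hpt
  have hπeq : π = ρ.withDensity H := by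
    rw [hρ, ← withDensity_mul _ hmG hmH, withDensity_congr_ae hGH, hνf]
  have hπρ : π ≪ ρ := hπeq ▸ withDensity_absolutelyContinuous ρ H
  have hrd : π.rnDeriv ρ =ᵐ[π] H := by
    have h := Measure.rnDeriv_withDensity ρ hmH
    rw [← hπeq] at h
    exact hπρ.ae_le h
  -- a.e. positivity and finiteness of the marginal densities under π
  have hae₁0 : ∀ᵐ p ∂π, g₁ p.1 ≠ 0 := by
    rw [ae_iff]
    simpa only [ne_eq, not_not] using hπg₁0
  have hae₂0 : ∀ᵐ p ∂π, g₂ p.2 ≠ 0 := by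
    rw [ae_iff]
    simpa only [ne_eq, not_not] using hπg₂0
  have hae₁t : ∀ᵐ p ∂π, g₁ p.1 ≠ ∞ := by
    rw [ae_iff]
    simpa only [ne_eq, not_not] using hac hνg₁top
  have hae₂t : ∀ᵐ p ∂π, g₂ p.2 ≠ ∞ := by
    rw [ae_iff]
    simpa only [ne_eq, not_not] using hac hνg₂top
  -- the a.e. decomposition of the log-density
  have hfac : ∀ᵐ p ∂π, f p = G p * H p := hac.ae_le hGH.symm
  have hsum : ∀ᵐ p ∂π, Real.log ((f p).toReal) =
      Real.log ((π.rnDeriv ρ p).toReal) + Real.log ((g₁ p.1).toReal) +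
        Real.log ((g₂ p.2).toReal) := by
    filter_upwards [hfac, hrd, Measure.rnDeriv_pos hac,
      hac.ae_le (Measure.rnDeriv_lt_top π ν), hae₁0, hae₂0, hae₁t, hae₂t] with p hfacp hrdp
        hfpos hflt h10 h20 h1t h2t
    have hGp : G p = g₁ p.1 * g₂ p.2 := rfl
    have hG0 : G p ≠ 0 := by rw [hGp]; exact mul_ne_zero h10 h20
    have hGt : G p ≠ ∞ := by rw [hGp]; exact ENNReal.mul_ne_top h1t h2t
    have hH0 : H p ≠ 0 := by
      intro h
      rw [h, mul_zero] at hfacp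
      exact hfpos.ne' hfacp
    have hHt : H p ≠ ∞ := by
      intro h
      rw [h, ENNReal.mul_top hG0] at hfacp
      exact hflt.ne hfacp
    have h1ne : (g₁ p.1).toReal ≠ 0 := ENNReal.toReal_ne_zero.mpr ⟨h10, h1t⟩
    have h2ne : (g₂ p.2).toReal ≠ 0 := ENNReal.toReal_ne_zero.mpr ⟨h20, h2t⟩
    have hHne : (H p).toReal ≠ 0 := ENNReal.toReal_ne_zero.mpr ⟨hH0, hHt⟩
    have hval : (f p).toReal = (g₁ p.1).toReal * ((g₂ p.2).toReal * (H p).toReal) := by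
      rw [hfacp, hGp, ENNReal.toReal_mul, ENNReal.toReal_mul]
      ring
    rw [hrdp, hval, Real.log_mul h1ne (mul_ne_zero h2ne hHne), Real.log_mul h2ne hHne]
    ring
  -- integrable negative parts
  have hbneg : Integrable (fun p => max (-Real.log ((π.rnDeriv ρ p).toReal)) 0) π :=
    integrable_neg_part_llr π ρ hπρ
  have hmeasc : Measurable fun x : E₁ => Real.log ((g₁ x).toReal) :=
    hmg₁.ennreal_toReal.log
  have hmeasd : Measurable fun y : E₂ => Real.log ((g₂ y).toReal) :=
    hmg₂.ennreal_toReal.log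
  have hcneg : Integrable (fun p : E₁ × E₂ => max (-Real.log ((g₁ p.1).toReal)) 0) π := by
    have h := integrable_neg_part_llr π₁ μ₁ hπ₁
    rw [hπ₁def, integrable_map_measure (g := fun x => max (-Real.log (((π.map Prod.fst).rnDeriv μ₁ x).toReal)) 0)
      (hmeasc.neg.max measurable_const).aestronglyMeasurable
      measurable_fst.aemeasurable] at h
    exact h
  have hdneg : Integrable (fun p : E₁ × E₂ => max (-Real.log ((g₂ p.2).toReal)) 0) π := by
    have h := integrable_neg_part_llr π₂ μ₂ hπ₂
    rw [hπ₂def, integrable_map_measure (g := fun y => max (-Real.log (((π.map Prod.snd).rnDeriv μ₂ y).toReal)) 0)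
      (hmeasd.neg.max measurable_const).aestronglyMeasurable
      measurable_snd.aemeasurable] at h
    exact h
  -- integrability of the three pieces
  have hb : Integrable (fun p => Real.log ((π.rnDeriv ρ p).toReal)) π := by
    refine Integrable.mono' (hint.abs.add ((hbneg.add hcneg).add hdneg))
      ((Measure.measurable_rnDeriv π ρ).ennreal_toReal.log).aestronglyMeasurable ?_
    filter_upwards [hsum] with p hp
    rw [Real.norm_eq_abs]
    exact abs_le_of_eq_add_add hp
  have hc : Integrable (fun p : E₁ × E₂ => Real.log ((g₁ p.1).toReal)) π := by
    refine Integrable.mono' (hint.abs.add ((hcneg.add hbneg).add hdneg))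
      (hmeasc.comp measurable_fst).aestronglyMeasurable ?_
    filter_upwards [hsum] with p hp
    rw [Real.norm_eq_abs]
    exact abs_le_of_eq_add_add (by linarith)
  have hd : Integrable (fun p : E₁ × E₂ => Real.log ((g₂ p.2).toReal)) π := by
    refine Integrable.mono' (hint.abs.add ((hdneg.add hbneg).add hcneg))
      (hmeasd.comp measurable_snd).aestronglyMeasurable ?_
    filter_upwards [hsum] with p hp
    rw [Real.norm_eq_abs]
    exact abs_le_of_eq_add_add (by linarith)
  -- Gibbs for the marginals
  have hcint₁ : Integrable (fun x => Real.log ((g₁ x).toReal)) π₁ := by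
    rw [hπ₁def, integrable_map_measure hmeasc.aestronglyMeasurable
      measurable_fst.aemeasurable]
    exact hc
  have hdint₂ : Integrable (fun y => Real.log ((g₂ y).toReal)) π₂ := by
    rw [hπ₂def, integrable_map_measure hmeasd.aestronglyMeasurable
      measurable_snd.aemeasurable]
    exact hd
  have hcpos : 0 ≤ ∫ p, Real.log ((g₁ p.1).toReal) ∂π := by
    have heq : ∫ x, Real.log ((g₁ x).toReal) ∂π₁ = ∫ p, Real.log ((g₁ p.1).toReal) ∂π := by
      rw [hπ₁def, integral_map measurable_fst.aemeasurable hmeasc.aestronglyMeasurable]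
    rw [← heq]
    exact integral_llr_nonneg' π₁ μ₁ hπ₁ hcint₁
  have hdpos : 0 ≤ ∫ p, Real.log ((g₂ p.2).toReal) ∂π := by
    have heq : ∫ y, Real.log ((g₂ y).toReal) ∂π₂ = ∫ p, Real.log ((g₂ p.2).toReal) ∂π := by
      rw [hπ₂def, integral_map measurable_snd.aemeasurable hmeasd.aestronglyMeasurable]
    rw [← heq]
    exact integral_llr_nonneg' π₂ μ₂ hπ₂ hdint₂
  -- decomposition of the integral
  have hsplit : ∫ p, Real.log ((f p).toReal) ∂π =
      (∫ p, Real.log ((π.rnDeriv ρ p).toReal) ∂π) + (∫ p, Real.log ((g₁ p.1).toReal) ∂π) +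
        (∫ p, Real.log ((g₂ p.2).toReal) ∂π) := by
    have hbc : Integrable (fun p => Real.log ((π.rnDeriv ρ p).toReal) +
        Real.log ((g₁ p.1).toReal)) π := hb.add hc
    rw [integral_congr_ae hsum, integral_add hbc hd, integral_add hb hc]
  -- conclusion
  simp only [klDiv']
  rw [if_pos ⟨hπρ, hb⟩, if_pos ⟨hac, hint⟩]
  exact EReal.coe_le_coe_iff.mpr (by linarith)
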